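/- On the unit disk, with Ξ = z̄ ∂_z + ∂_{z̄} and f(z) = 1/(1 − |z|²), the rescaled field fΞ commutes with its conjugate: [fΞ, conj(f)·conj(Ξ)] = 0. Equivalently, f solves |z|² f ∂f̄/∂z + z f ∂f̄/∂z̄ − z f̄ ∂f/∂z̄ − f̄ ∂f/∂z + z̄ |f|² = 0. -/

import Mathlib

open Complex ContinuousLinearMap

/-- Wirtinger derivative `∂/∂z = (1/2)(∂_x − i ∂_y)` of `f : ℂ → ℂ`. -/
noncomputable def dz1 (f : ℂ → ℂ) (z : ℂ) : ℂ :=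
  (1 / 2) * (fderiv ℝ f z 1 - Complex.I * fderiv ℝ f z Complex.I)

/-- Wirtinger derivative `∂/∂z̄ = (1/2)(∂_x + i ∂_y)`. -/
noncomputable def dzb1 (f : ℂ → ℂ) (z : ℂ) : ℂ :=
  (1 / 2) * (fderiv ℝ f z 1 + Complex.I * fderiv ℝ f z Complex.I)

/-- A complex vector field on `ℂ`, given by its coefficients in `(∂_z, ∂_z̄)`. -/
abbrev VF1 := ℂ → ℂ × ℂ

/-- Action of a complex vector field on a function. -/
noncomputable def appVF1 (X : VF1) (f : ℂ → ℂ) (z : ℂ) : ℂ :=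
  (X z).1 * dz1 f z + (X z).2 * dzb1 f z

/-- Lie bracket of complex vector fields on `ℂ`. -/
noncomputable def bracketVF1 (X Y : VF1) : VF1 := fun z =>
  (appVF1 X (fun q => (Y q).1) z - appVF1 Y (fun q => (X q).1) z,
   appVF1 X (fun q => (Y q).2) z - appVF1 Y (fun q => (X q).2) z)

/-- The field `Ξ = z̄ ∂_z + ∂_z̄`. -/
noncomputable def Xi : VF1 := fun z => ((starRingEnd ℂ) z, 1)

/-- Its conjugate `Ξ̄ = z ∂_z̄ + ∂_z`. -/
noncomputable def Xib : VF1 := fun z => (1, z)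

noncomputable def Ffun : ℂ → ℂ := fun z => ((1 / (1 - Complex.normSq z) : ℝ) : ℂ)

noncomputable def NSD (z : ℂ) : ℂ →L[ℝ] ℝ :=
  (z.re • reCLM + z.re • reCLM) + (z.im • imCLM + z.im • imCLM)

lemma hasNormSq (z : ℂ) : HasFDerivAt (fun w : ℂ => Complex.normSq w) (NSD z) z := by
  have h : (fun w : ℂ => Complex.normSq w) = fun w : ℂ => w.re * w.re + w.im * w.im := by
    funext w; exact Complex.normSq_apply w
  rw [h]
  exact (reCLM.hasFDerivAt.mul reCLM.hasFDerivAt).add (imCLM.hasFDerivAt.mul imCLM.hasFDerivAt)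

noncomputable def FD (z : ℂ) : ℂ →L[ℝ] ℂ :=
  ofRealCLM.comp (((-mulLeftRight ℝ ℝ (1 - Complex.normSq z)⁻¹ (1 - Complex.normSq z)⁻¹)).comp
    ((0 : ℂ →L[ℝ] ℝ) - NSD z))

lemma hasF (z : ℂ) (h : (1:ℝ) - Complex.normSq z ≠ 0) : HasFDerivAt Ffun (FD z) z := by
  have h1 : HasFDerivAt (fun w : ℂ => (1 : ℝ) - Complex.normSq w)
      ((0 : ℂ →L[ℝ] ℝ) - NSD z) z := (hasFDerivAt_const 1 z).sub (hasNormSq z)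
  have h2 := (hasFDerivAt_inv' (𝕜 := ℝ) h).comp z h1
  have h3 := ofRealCLM.hasFDerivAt.comp z h2
  have : Ffun = fun w : ℂ => ofRealCLM ((1 - Complex.normSq w)⁻¹) := by
    funext w; simp [Ffun, one_div]
  rw [this]
  exact h3

lemma fdF1 (z : ℂ) (h : (1:ℝ) - Complex.normSq z ≠ 0) :
    fderiv ℝ Ffun z 1 = ((((1 - Complex.normSq z)⁻¹)^2 * (2 * z.re) : ℝ) : ℂ) := by
  rw [(hasF z h).fderiv]
  simp only [FD, NSD, comp_apply, neg_apply, sub_apply, zero_apply, add_apply, smul_apply,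
    reCLM_apply, imCLM_apply, mulLeftRight_apply, Complex.one_re, Complex.one_im,
    ofRealCLM_apply, smul_eq_mul]
  rw [Complex.ofReal_inj]
  ring

lemma fdFI (z : ℂ) (h : (1:ℝ) - Complex.normSq z ≠ 0) :
    fderiv ℝ Ffun z Complex.I = ((((1 - Complex.normSq z)⁻¹)^2 * (2 * z.im) : ℝ) : ℂ) := by
  rw [(hasF z h).fderiv]
  simp only [FD, NSD, comp_apply, neg_apply, sub_apply, zero_apply, add_apply, smul_apply,
    reCLM_apply, imCLM_apply, mulLeftRight_apply, Complex.I_re, Complex.I_im,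
    ofRealCLM_apply, smul_eq_mul]
  rw [Complex.ofReal_inj]
  ring

lemma Fsq (z : ℂ) : (Ffun z)^2 = ((((1 - Complex.normSq z)⁻¹)^2 : ℝ) : ℂ) := by
  simp [Ffun]

lemma dz1F (z : ℂ) (h : (1:ℝ) - Complex.normSq z ≠ 0) :
    dz1 Ffun z = (Ffun z)^2 * (starRingEnd ℂ) z := by
  rw [dz1, fdF1 z h, fdFI z h, Fsq]
  rw [Complex.ext_iff]
  simp
  constructor <;> ring

lemma dzb1F (z : ℂ) (h : (1:ℝ) - Complex.normSq z ≠ 0) :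
    dzb1 Ffun z = (Ffun z)^2 * z := by
  rw [dzb1, fdF1 z h, fdFI z h, Fsq]
  rw [Complex.ext_iff]
  simp
  constructor <;> ring

lemma dz1_mul (f g : ℂ → ℂ) (z : ℂ) (hf : DifferentiableAt ℝ f z) (hg : DifferentiableAt ℝ g z) :
    dz1 (fun q => f q * g q) z = dz1 f z * g z + f z * dz1 g z := by
  rw [dz1, (show HasFDerivAt (fun q => f q * g q) _ z from hf.hasFDerivAt.mul hg.hasFDerivAt).fderiv, dz1, dz1]
  simp
  ring

lemma dzb1_mul (f g : ℂ → ℂ) (z : ℂ) (hf : DifferentiableAt ℝ f z) (hg : DifferentiableAt ℝ g z) :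
    dzb1 (fun q => f q * g q) z = dzb1 f z * g z + f z * dzb1 g z := by
  rw [dzb1, (show HasFDerivAt (fun q => f q * g q) _ z from hf.hasFDerivAt.mul hg.hasFDerivAt).fderiv, dzb1, dzb1]
  simp
  ring

lemma hasId (z : ℂ) : HasFDerivAt (fun q : ℂ => q) (ContinuousLinearMap.id ℝ ℂ) z :=
  hasFDerivAt_id z

lemma dz1_id (z : ℂ) : dz1 (fun q => q) z = 1 := by
  rw [dz1, (hasId z).fderiv]; norm_num [Complex.ext_iff]

lemma dzb1_id (z : ℂ) : dzb1 (fun q => q) z = 0 := by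
  rw [dzb1, (hasId z).fderiv]; simp [Complex.ext_iff]

lemma hasConj (z : ℂ) : HasFDerivAt (fun q : ℂ => (starRingEnd ℂ) q)
    (conjCLE.toContinuousLinearMap) z := conjCLE.toContinuousLinearMap.hasFDerivAt

lemma dz1_conj (z : ℂ) : dz1 (fun q => (starRingEnd ℂ) q) z = 0 := by
  rw [dz1, (hasConj z).fderiv]; simp [Complex.ext_iff]

lemma dzb1_conj (z : ℂ) : dzb1 (fun q => (starRingEnd ℂ) q) z = 1 := by
  rw [dzb1, (hasConj z).fderiv]
  simp [Complex.ext_iff]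
  all_goals norm_num


/-- With `f = 1/(1 − |z|²)`, the field `fΞ` commutes with its conjugate:
`[fΞ, f̄ Ξ̄] = 0`; equivalently `f` solves
`|z|² f ∂f̄/∂z + z f ∂f̄/∂z̄ − z f̄ ∂f/∂z̄ − f̄ ∂f/∂z + z̄ |f|² = 0`. -/
theorem stmt_17 (z : ℂ) (hz : ‖z‖ < 1) :
    bracketVF1 (fun q => (Ffun q * (starRingEnd ℂ) q, Ffun q))
      (fun q => ((starRingEnd ℂ) (Ffun q), (starRingEnd ℂ) (Ffun q) * q)) z
        = (0, 0) ∧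
    ((Complex.normSq z : ℝ) : ℂ) * Ffun z *
          dz1 (fun q => (starRingEnd ℂ) (Ffun q)) z +
        z * Ffun z * dzb1 (fun q => (starRingEnd ℂ) (Ffun q)) z -
        z * (starRingEnd ℂ) (Ffun z) * dzb1 Ffun z -
        (starRingEnd ℂ) (Ffun z) * dz1 Ffun z +
        (starRingEnd ℂ) z * (Ffun z * (starRingEnd ℂ) (Ffun z)) = 0 := by
  have hn : Complex.normSq z < 1 := by
    rw [Complex.normSq_eq_norm_sq]
    exact pow_lt_one₀ (norm_nonneg z) hz (by norm_num)
  have hden : (1:ℝ) - Complex.normSq z ≠ 0 := by linarith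
  have hFd : DifferentiableAt ℝ Ffun z := (hasF z hden).differentiableAt
  have hcd : DifferentiableAt ℝ (fun q : ℂ => (starRingEnd ℂ) q) z := (hasConj z).differentiableAt
  have hid : DifferentiableAt ℝ (fun q : ℂ => q) z := (hasId z).differentiableAt
  have hc1 : (fun q => (starRingEnd ℂ) (Ffun q)) = Ffun := by
    funext q; simp [Ffun, Complex.conj_ofReal]
  have hc3 : (fun q => (starRingEnd ℂ) (Ffun q) * q) = fun q => Ffun q * q := by
    funext q; simp [Ffun, Complex.conj_ofReal]
  have hcv : (starRingEnd ℂ) (Ffun z) = Ffun z := by simp [Ffun, Complex.conj_ofReal]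
  have hmc : z * (starRingEnd ℂ) z = ((Complex.normSq z : ℝ) : ℂ) := Complex.mul_conj z
  have hkey : Ffun z * (1 - ((Complex.normSq z : ℝ) : ℂ)) = 1 := by
    simp only [Ffun]
    rw [show ((1:ℂ) - ((Complex.normSq z : ℝ):ℂ)) = (((1 - Complex.normSq z : ℝ)):ℂ) by
      push_cast; ring]
    rw [← Complex.ofReal_mul, one_div, inv_mul_cancel₀ hden]
    norm_num
  have e1 := dz1F z hden
  have e2 := dzb1F z hden
  have e3 : dz1 (fun q => Ffun q * (starRingEnd ℂ) q) z
      = dz1 Ffun z * (starRingEnd ℂ) z := by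
    rw [dz1_mul _ _ z hFd hcd, dz1_conj]; ring
  have e4 : dzb1 (fun q => Ffun q * (starRingEnd ℂ) q) z
      = dzb1 Ffun z * (starRingEnd ℂ) z + Ffun z := by
    rw [dzb1_mul _ _ z hFd hcd, dzb1_conj]; ring
  have e5 : dz1 (fun q => Ffun q * q) z = dz1 Ffun z * z + Ffun z := by
    rw [dz1_mul _ _ z hFd hid, dz1_id]; ring
  have e6 : dzb1 (fun q => Ffun q * q) z = dzb1 Ffun z * z := by
    rw [dzb1_mul _ _ z hFd hid, dzb1_id]; ring
  constructor
  · simp only [bracketVF1, appVF1, Prod.mk.injEq]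
    rw [hc1, hc3, e3, e4, e5, e6, e1, e2, hcv]
    constructor
    · linear_combination (Ffun z^2 * z) * hkey - (Ffun z^3 * z) * hmc
    · linear_combination (-(Ffun z^2 * (starRingEnd ℂ) z)) * hkey
        + (Ffun z^3 * (starRingEnd ℂ) z) * hmc
  · rw [hc1, e1, e2, hcv]
    show ((Complex.normSq z : ℝ) : ℂ) * Ffun z * (Ffun z ^ 2 * (starRingEnd ℂ) z) + _ - _ - _ + _ = 0
    linear_combination (-((starRingEnd ℂ) z * Ffun z^2)) * hkey
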